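/- (Theorem 2) Let I be a base, let D ⊆ ℂ^J be an open neighborhood of 0, and let F(β,x) be an analytic function on V × D satisfying the reduced GG-system (R1), (R2) associated with A and I. Then there exists a function u : V → ℂ satisfying the periodicity conditions u(β − ω^i) = u(β) for all i ∈ I, such that for every β ∈ V and every multi-index m = (m_j)_{j∈J} ∈ ℤ_{≥0}^J, the m-th Taylor coefficient of x ↦ F(β,x) at x = 0 equals u(β − Σ_{j∈J} m_j ω^j) / (Γ_I(β − Σ_{j∈J} m_j ω^j + 1) · ∏_{j∈J} m_j!); that is, F(β,x) = Σ_m [u(β − Σ_j m_j ω^j)/Γ_I(β − Σ_j m_j ω^j + 1)] · x^m/m! on V × D. Here 1/Γ_I(·) denotes the product of reciprocal Gamma functions, which is entire. -/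

import Mathlib

/-- The partial derivative of `g : ℂ^ι → ℂ` in the `j`-th coordinate direction. -/
noncomputable def pderivI {ι : Type*} [Fintype ι] [DecidableEq ι]
    (j : ι) (g : (ι → ℂ) → ℂ) : (ι → ℂ) → ℂ :=
  fun x => fderiv ℂ g x (Pi.single j 1)

/-- The iterated partial derivative `∏_j (∂/∂x_j)^(m j)`. -/
noncomputable def multiPD {ι : Type*} [Fintype ι] [DecidableEq ι] (m : ι → ℕ) :
    ((ι → ℂ) → ℂ) → ((ι → ℂ) → ℂ) :=
  Finset.univ.toList.foldr (fun j G => (pderivI j)^[m j] ∘ G) id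

/-- Theorem 2: any analytic solution `F(β,x)` on `V × D` (`D` a neighborhood of `x = 0`)
of the reduced GG-system (R1),(R2) associated with `A` and a base `I` has Taylor
coefficients at `x = 0` of the form `u(β - ∑_j m_j ω^j)/(Γ_I(β - ∑_j m_j ω^j + 1) m!)`,
i.e. `(∏_j (∂/∂x_j)^{m_j} F)(β,0) = u(β - ∑_j m_j ω^j) ∏_{i∈I} Γ(coord_i + 1)⁻¹`, for some
function `u : V → ℂ` with `u(β - ω^i) = u(β)` for all `i ∈ I`. -/
theorem stmt9 {V : Type*} [NormedAddCommGroup V] [NormedSpace ℂ V] [FiniteDimensional ℂ V]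
    {N : ℕ} (ω : Fin N → V)
    (hspan : Submodule.span ℂ (Set.range ω) = ⊤)
    (I : Finset (Fin N)) (hcard : I.card = Module.finrank ℂ V)
    (hind : LinearIndependent ℂ (fun i : I => ω i))
    (c : V → Fin N → ℂ) (hc : ∀ β : V, ∑ i ∈ I, c β i • ω i = β)
    (D : Set ({j : Fin N // j ∉ I} → ℂ)) (hDopen : IsOpen D) (hD0 : (0 : _) ∈ D)
    (F : V → ({j : Fin N // j ∉ I} → ℂ) → ℂ)
    (hFA : AnalyticOnNhd ℂ (fun p : V × ({j : Fin N // j ∉ I} → ℂ) => F p.1 p.2)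
      (Set.univ ×ˢ D))
    (hR1 : ∀ (β : V), ∀ x ∈ D, ∀ i ∈ I,
      c β i * F β x +
        ∑ j : {j : Fin N // j ∉ I}, c (-(ω j.1)) i * x j * fderiv ℂ (F β) x (Pi.single j 1)
        = F (β - ω i) x)
    (hR2 : ∀ (β : V), ∀ x ∈ D, ∀ j : {j : Fin N // j ∉ I},
      fderiv ℂ (F β) x (Pi.single j 1) = F (β - ω j.1) x) :
    ∃ u : V → ℂ, (∀ β : V, ∀ i ∈ I, u (β - ω i) = u β) ∧
      ∀ (β : V) (m : {j : Fin N // j ∉ I} → ℕ),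
        multiPD m (F β) 0 =
          u (β - ∑ j : {j : Fin N // j ∉ I}, (m j : ℂ) • ω j.1) *
            ∏ i ∈ I, (Complex.Gamma
              (c (β - (∑ j : {j : Fin N // j ∉ I}, (m j : ℂ) • ω j.1) + ∑ i' ∈ I, ω i') i))⁻¹ := by
  classical
  set σ : V := ∑ i' ∈ I, ω i' with hσdef
  -- uniqueness of coordinates w.r.t. the independent family
  have huniq : ∀ f g : I → ℂ, ∑ i : I, f i • ω i.1 = ∑ i : I, g i • ω i.1 →
      ∀ i : I, f i = g i := by
    intro f g h i
    have h0 : ∑ i : I, (f i - g i) • ω i.1 = 0 := by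
      simp only [sub_smul, Finset.sum_sub_distrib, h, sub_self]
    exact sub_eq_zero.mp ((Fintype.linearIndependent_iff.mp hind) (fun i => f i - g i) h0 i)
  have hc' : ∀ β : V, ∑ i : I, c β i.1 • ω i.1 = β := by
    intro β
    rw [Finset.sum_coe_sort I (fun i => c β i • ω i)]
    exact hc β
  -- coordinates of β - ∑_{a∈s} ω a for s ⊆ I
  have hsubS : ∀ (β : V) (s : Finset (Fin N)), s ⊆ I → ∀ i : I,
      c (β - ∑ a ∈ s, ω a) i.1 = c β i.1 - (if i.1 ∈ s then 1 else 0) := by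
    intro β s hs i
    refine huniq (fun i => c (β - ∑ a ∈ s, ω a) i.1)
      (fun i => c β i.1 - if i.1 ∈ s then 1 else 0) ?_ i
    rw [hc']
    have h1 : ∑ i : I, (c β i.1 - if i.1 ∈ s then (1:ℂ) else 0) • ω i.1
        = (∑ i : I, c β i.1 • ω i.1) - ∑ i : I, (if i.1 ∈ s then (1:ℂ) else 0) • ω i.1 := by
      rw [← Finset.sum_sub_distrib]
      simp [sub_smul]
    rw [h1, hc']
    congr 1
    rw [Finset.sum_coe_sort I (fun a => (if a ∈ s then (1:ℂ) else 0) • ω a)]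
    simp only [ite_smul, one_smul, zero_smul]
    rw [Finset.sum_ite_mem I s ω, Finset.inter_eq_right.mpr hs]
  -- coordinates of β + σ
  have hadd : ∀ (β : V) (i : I), c (β + σ) i.1 = c β i.1 + 1 := by
    intro β i
    refine huniq (fun i => c (β + σ) i.1) (fun i => c β i.1 + 1) ?_ i
    rw [hc']
    have h1 : ∑ i : I, (c β i.1 + 1) • ω i.1
        = (∑ i : I, c β i.1 • ω i.1) + ∑ i : I, ω i.1 := by
      rw [← Finset.sum_add_distrib]
      simp [add_smul]
    rw [h1, hc', hσdef, Finset.sum_coe_sort I ω]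
  have hKadd : ∀ (β : V) (K : ℕ) (i : I), c (β + K • σ) i.1 = c β i.1 + K := by
    intro β K
    induction K with
    | zero => simp
    | succ K ih =>
      intro i
      have h1 : β + (K + 1) • σ = (β + K • σ) + σ := by
        rw [succ_nsmul]; abel
      rw [h1, hadd _ i, ih i]
      push_cast; ring
  -- R1 at x = 0
  have hstep1 : ∀ (β : V) (i : I), F (β - ω i.1) 0 = c β i.1 * F β 0 := by
    intro β i
    have h := hR1 β 0 hD0 i.1 i.2
    simpa using h.symm
  -- full shift by σ
  have hfullS : ∀ (s : Finset (Fin N)), s ⊆ I → ∀ β : V,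
      F (β - ∑ a ∈ s, ω a) 0 = (∏ a ∈ s, c β a) * F β 0 := by
    intro s
    induction s using Finset.induction_on with
    | empty => intro _ β; simp
    | @insert a s ha ih =>
      intro hs β
      have haI : a ∈ I := hs (Finset.mem_insert_self a s)
      have hsI : s ⊆ I := fun x hx => hs (Finset.mem_insert_of_mem hx)
      have h1 : β - ∑ b ∈ insert a s, ω b = (β - ∑ b ∈ s, ω b) - ω a := by
        rw [Finset.sum_insert ha]; abel
      rw [h1, hstep1 (β - ∑ b ∈ s, ω b) ⟨a, haI⟩, ih hsI β,
        hsubS β s hsI ⟨a, haI⟩, Finset.prod_insert ha]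
      simp [ha]
      ring
  have hKstep : ∀ β : V, F β 0 = (∏ a ∈ I, (c β a + 1)) * F (β + σ) 0 := by
    intro β
    have h := hfullS I (subset_refl I) (β + σ)
    rw [← hσdef, add_sub_cancel_right] at h
    rw [h]
    congr 1
    refine Finset.prod_congr rfl fun a ha => ?_
    exact hadd β ⟨a, ha⟩
  have hiter : ∀ (γ : V) (K : ℕ),
      F γ 0 = (∏ k ∈ Finset.range K, ∏ a ∈ I, (c γ a + k + 1)) * F (γ + K • σ) 0 := by
    intro γ K
    induction K with
    | zero => simp
    | succ K ih =>
      rw [ih, hKstep (γ + K • σ), Finset.prod_range_succ]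
      have h1 : γ + K • σ + σ = γ + (K + 1) • σ := by rw [succ_nsmul]; abel
      have h2 : ∀ a ∈ I, c (γ + K • σ) a + 1 = c γ a + K + 1 := by
        intro a ha
        rw [hKadd γ K ⟨a, ha⟩]
      rw [h1, Finset.prod_congr rfl h2]
      ring
  -- the shift bound
  set Kb : V → ℕ := fun β => (∑ a ∈ I, ⌈‖c β a‖⌉₊) + 1 with hKbdef
  have hKb : ∀ (β : V), ∀ a ∈ I, ∀ k : ℕ, Kb β ≤ k → c β a + k ≠ 0 := by
    intro β a ha k hk h0
    have habs : c β a = -(k:ℂ) := by linear_combination h0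
    have hceil : ⌈‖c β a‖⌉₊ = k := by
      rw [habs]
      simp
    have hle : ⌈‖c β a‖⌉₊ ≤ ∑ a ∈ I, ⌈‖c β a‖⌉₊ :=
      Finset.single_le_sum (f := fun a => ⌈‖c β a‖⌉₊) (fun _ _ => Nat.zero_le _) ha
    have hk' : (∑ a ∈ I, ⌈‖c β a‖⌉₊) + 1 ≤ k := hk
    omega
  set uK : V → ℕ → ℂ :=
    fun β K => F (β + K • σ) 0 * ∏ a ∈ I, Complex.Gamma (c β a + K + 1) with huKdef
  set u : V → ℂ := fun β => uK β (Kb β) with hudef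
  have hstable : ∀ (β : V) (K : ℕ), Kb β ≤ K → uK β (K + 1) = uK β K := by
    intro β K hK
    simp only [huKdef]
    have hΓ : ∀ a ∈ I, Complex.Gamma (c β a + (K + 1 : ℕ) + 1)
        = (c β a + K + 1) * Complex.Gamma (c β a + K + 1) := by
      intro a ha
      have hz : c β a + (K:ℂ) + 1 ≠ 0 := by
        have := hKb β a ha (K + 1) (by omega)
        intro h0; apply this; push_cast; linear_combination h0
      have h := Complex.Gamma_add_one (c β a + K + 1) hz
      rw [show (c β a + ((K:ℕ)+1:ℕ) + 1 : ℂ) = c β a + (K:ℂ) + 1 + 1 by push_cast; ring, h]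
    rw [Finset.prod_congr rfl hΓ, Finset.prod_mul_distrib]
    have hG : F (β + K • σ) 0 = (∏ a ∈ I, (c β a + K + 1)) * F (β + (K + 1) • σ) 0 := by
      have h := hKstep (β + K • σ)
      have h1 : β + K • σ + σ = β + (K + 1) • σ := by rw [succ_nsmul]; abel
      have h2 : ∀ a ∈ I, c (β + K • σ) a + 1 = c β a + K + 1 := by
        intro a ha; rw [hKadd β K ⟨a, ha⟩]
      rw [h1, Finset.prod_congr rfl h2] at h
      exact h
    rw [hG]
    ring
  have hstable' : ∀ (β : V) (K : ℕ), Kb β ≤ K → uK β K = u β := by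
    intro β K hK
    induction K, hK using Nat.le_induction with
    | base => rfl
    | succ K hK ih => rw [hstable β K hK, ih]
  -- Gamma product formula
  have hGammaProd : ∀ (s : ℂ) (K : ℕ), (∀ k ∈ Finset.range K, s + k + 1 ≠ 0) →
      Complex.Gamma (s + K + 1) = (∏ k ∈ Finset.range K, (s + k + 1)) * Complex.Gamma (s + 1) := by
    intro s K
    induction K with
    | zero => intro _; simp
    | succ K ih =>
      intro h
      have h1 := ih fun k hk => h k (Finset.mem_range.mpr (Nat.lt_succ_of_lt (Finset.mem_range.mp hk)))
      have h2 : s + (K:ℂ) + 1 ≠ 0 := h K (Finset.self_mem_range_succ K)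
      rw [show (s + ((K:ℕ)+1:ℕ) + 1 : ℂ) = (s + K + 1) + 1 by push_cast; ring,
        Complex.Gamma_add_one _ h2, h1, Finset.prod_range_succ]
      ring
  -- main coefficient identity
  have hmain : ∀ γ : V, F γ 0 = u γ * ∏ a ∈ I, (Complex.Gamma (c γ a + 1))⁻¹ := by
    intro γ
    have key : ∀ a ∈ I, ∏ k ∈ Finset.range (Kb γ), (c γ a + k + 1)
        = (Complex.Gamma (c γ a + 1))⁻¹ * Complex.Gamma (c γ a + (Kb γ) + 1) := by
      intro a ha
      by_cases hz : ∀ k ∈ Finset.range (Kb γ), c γ a + k + 1 ≠ 0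
      · have h1 := hGammaProd (c γ a) (Kb γ) hz
        have h2 : Complex.Gamma (c γ a + 1) ≠ 0 := by
          intro h0
          rcases (Complex.Gamma_eq_zero_iff _).mp h0 with ⟨n, hn⟩
          have hval : c γ a = -((n:ℂ) + 1) := by linear_combination hn
          have habs : ‖c γ a‖ = ((n + 1 : ℕ) : ℝ) := by
            rw [hval, show -((n:ℂ)+1) = -((n+1 : ℕ):ℂ) by push_cast; ring,
              norm_neg, Complex.norm_natCast]
          have hceil : ⌈‖c γ a‖⌉₊ = n + 1 := by
            rw [habs, Nat.ceil_natCast]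
          have hle : ⌈‖c γ a‖⌉₊ ≤ ∑ a ∈ I, ⌈‖c γ a‖⌉₊ :=
            Finset.single_le_sum (f := fun a => ⌈‖c γ a‖⌉₊) (fun _ _ => Nat.zero_le _) ha
          have hnK : n < Kb γ := by
            have hKbγ : (∑ a ∈ I, ⌈‖c γ a‖⌉₊) + 1 = Kb γ := rfl
            omega
          exact hz n (Finset.mem_range.mpr hnK) (by rw [hval]; ring)
        rw [h1, mul_comm (∏ k ∈ Finset.range (Kb γ), (c γ a + k + 1)) _, ← mul_assoc,
          inv_mul_cancel₀ h2, one_mul]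
      · push_neg at hz
        rcases hz with ⟨k, hk, hk0⟩
        rw [Finset.prod_eq_zero hk hk0]
        have hΓ0 : Complex.Gamma (c γ a + 1) = 0 := by
          refine (Complex.Gamma_eq_zero_iff _).mpr ⟨k, ?_⟩
          linear_combination hk0
        rw [hΓ0, inv_zero, zero_mul]
    have h1 := hiter γ (Kb γ)
    rw [Finset.prod_comm, Finset.prod_congr rfl key, Finset.prod_mul_distrib] at h1
    rw [h1]
    simp only [hudef, huKdef]
    ring
  -- iterated partial derivatives
  have hiterD : ∀ (j : {j : Fin N // j ∉ I}) (k : ℕ) (γ : V) (g : ({j : Fin N // j ∉ I} → ℂ) → ℂ),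
      Set.EqOn g (F γ) D →
      Set.EqOn ((pderivI j)^[k] g) (F (γ - (k:ℂ) • ω j.1)) D := by
    intro j k
    induction k with
    | zero => intro γ g hg; simpa using hg
    | succ k ih =>
      intro γ g hg x hx
      rw [Function.iterate_succ_apply']
      have he : (pderivI j)^[k] g =ᶠ[nhds x] F (γ - (k:ℂ) • ω j.1) :=
        Filter.eventuallyEq_of_mem (hDopen.mem_nhds hx) (ih γ g hg)
      calc pderivI j ((pderivI j)^[k] g) x
          = fderiv ℂ ((pderivI j)^[k] g) x (Pi.single j 1) := rfl
        _ = fderiv ℂ (F (γ - (k:ℂ) • ω j.1)) x (Pi.single j 1) := by rw [he.fderiv_eq]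
        _ = F (γ - (k:ℂ) • ω j.1 - ω j.1) x := hR2 _ x hx j
        _ = F (γ - ((k+1:ℕ):ℂ) • ω j.1) x := by
            rw [show γ - (k:ℂ) • ω j.1 - ω j.1 = γ - ((k+1:ℕ):ℂ) • ω j.1 by
              push_cast; rw [add_smul, one_smul]; abel]
  have hfold : ∀ (m : {j : Fin N // j ∉ I} → ℕ) (l : List {j : Fin N // j ∉ I}) (γ : V),
      Set.EqOn (l.foldr (fun j G => (pderivI j)^[m j] ∘ G) id (F γ))
        (F (γ - (l.map (fun j => (m j : ℂ) • ω j.1)).sum)) D := by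
    intro m l
    induction l with
    | nil =>
      intro γ
      simp only [List.foldr_nil, List.map_nil, List.sum_nil, sub_zero, id]
      exact fun x _ => rfl
    | cons j t ih =>
      intro γ
      have h1 := hiterD j (m j) (γ - (t.map (fun j => (m j : ℂ) • ω j.1)).sum) _ (ih γ)
      have h2 : γ - (t.map (fun j => (m j : ℂ) • ω j.1)).sum - ((m j : ℕ):ℂ) • ω j.1
          = γ - ((List.map (fun j => (m j : ℂ) • ω j.1) (j :: t)).sum) := by
        rw [List.map_cons, List.sum_cons]; abel
      rw [List.foldr_cons]
      rw [h2] at h1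
      exact h1
  refine ⟨u, ?_, ?_⟩
  · -- periodicity
    intro β i hi
    set K := max (Kb β) (Kb (β - ω i)) with hKdef
    rw [← hstable' (β - ω i) K (le_max_right _ _), ← hstable' β K (le_max_left _ _)]
    simp only [huKdef]
    have hsub1 : ∀ a, a ∈ I → c (β - ω i) a = c β a - (if a = i then 1 else 0) := by
      intro a haI
      have h := hsubS β {i} (Finset.singleton_subset_iff.mpr hi) ⟨a, haI⟩
      simpa using h
    have hG1 : β - ω i + K • σ = (β + K • σ) - ω i := by abel
    have hG2 : F ((β + K • σ) - ω i) 0 = (c β i + K) * F (β + K • σ) 0 := by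
      rw [hstep1 (β + K • σ) ⟨i, hi⟩, hKadd β K ⟨i, hi⟩]
    have hprodL : ∏ a ∈ I, Complex.Gamma (c (β - ω i) a + K + 1)
        = Complex.Gamma (c β i + K) * ∏ a ∈ I.erase i, Complex.Gamma (c β a + K + 1) := by
      rw [← Finset.mul_prod_erase I _ hi]
      congr 1
      · congr 1
        rw [hsub1 i hi, if_pos rfl]
        ring
      · refine Finset.prod_congr rfl fun a haa => ?_
        have haI : a ∈ I := Finset.mem_of_mem_erase haa
        have hne : a ≠ i := Finset.ne_of_mem_erase haa
        rw [hsub1 a haI, if_neg hne, sub_zero]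
    have hprodR : ∏ a ∈ I, Complex.Gamma (c β a + K + 1)
        = Complex.Gamma (c β i + K + 1) * ∏ a ∈ I.erase i, Complex.Gamma (c β a + K + 1) :=
      (Finset.mul_prod_erase I _ hi).symm
    have hΓ : Complex.Gamma (c β i + K + 1) = (c β i + K) * Complex.Gamma (c β i + K) :=
      Complex.Gamma_add_one _ (hKb β i hi K (le_max_left _ _))
    rw [hG1, hG2, hprodL, hprodR, hΓ]
    ring
  · -- Taylor coefficients
    intro β m
    have hls : ((Finset.univ.toList).map (fun j : {j : Fin N // j ∉ I} => (m j : ℂ) • ω j.1)).sum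
        = ∑ j : {j : Fin N // j ∉ I}, (m j : ℂ) • ω j.1 := by
      rw [← Multiset.sum_coe, ← Multiset.map_coe, Finset.coe_toList]
      rfl
    have hPD : multiPD m (F β) 0
        = F (β - ∑ j : {j : Fin N // j ∉ I}, (m j : ℂ) • ω j.1) 0 := by
      have h := hfold m Finset.univ.toList β hD0
      rw [hls] at h
      exact h
    set γ := β - ∑ j : {j : Fin N // j ∉ I}, (m j : ℂ) • ω j.1 with hγdef
    rw [hPD, hmain γ]
    congr 1
    refine Finset.prod_congr rfl fun a ha => ?_
    rw [hadd γ ⟨a, ha⟩]
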